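/- Let A consist of the covectors e¹, e², e¹+e², e¹−e² on ℂ² with nonzero multiplicities c₁, c₂, c₊, c₋, and suppose the form G = Σ_{α∈A} c_α α⊗α is non-degenerate. Then A is a trigonometric ∨-system if and only if c₁ = c₂, and this condition is equivalent to the orthogonality (e¹+e², e¹−e²) = 0 under the inner product induced by G on the dual space. -/

import Mathlib

open scoped BigOperators

noncomputable section

abbrev V (n : ℕ) := Fin n → ℂ
abbrev D (n : ℕ) := Module.Dual ℂ (V n)

/-- Wedge of two covectors: `(α∧β)(a,b) = α(a)β(b) − α(b)β(a)`. -/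
def wedge {n : ℕ} (α β : D n) (a b : V n) : ℂ := α a * β b - α b * β a

/-- `β` is parallel (collinear) to `α`. -/
def Parallel {n : ℕ} (α β : D n) : Prop := ∃ t : ℂ, β = t • α

/-- Two covectors belong to a common `α`-series: their difference or sum is an
integer multiple of `α`. -/
def SameSer {n : ℕ} (α γ₁ γ₂ : D n) : Prop :=
  ∃ m : ℤ, γ₁ - γ₂ = (m : ℂ) • α ∨ γ₁ + γ₂ = (m : ℂ) • α

/-- `Γ` is a (maximal) `α`-series of the system `A`. -/
def IsSeries {n : ℕ} (A : Finset (D n)) (α : D n) (Γ : Finset (D n)) : Prop :=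
  Γ ⊆ A ∧ (∀ β ∈ Γ, ¬ Parallel α β) ∧
    (∀ γ₁ ∈ Γ, ∀ γ₂ ∈ Γ, SameSer α γ₁ γ₂) ∧
    (∀ β ∈ A, ¬ Parallel α β → (∃ γ ∈ Γ, SameSer α β γ) → β ∈ Γ)

/-- The trigonometric ∨-system series conditions:
for every `α ∈ A` and every `α`-series `Γ`, `Σ_{β∈Γ} c_β (α,β) α∧β = 0`. -/
def SeriesCond {n : ℕ} (A : Finset (D n)) (c : D n → ℂ) (ip : D n → D n → ℂ) : Prop :=
  ∀ α ∈ A, ∀ Γ : Finset (D n), IsSeries A α Γ →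
    ∀ a b : V n, ∑ β ∈ Γ, c β * ip α β * wedge α β a b = 0

/-- The bilinear form `G(u,v) = Σ_{α∈A} c_α α(u) α(v)`. -/
def Gform {n : ℕ} (A : Finset (D n)) (c : D n → ℂ) (u v : V n) : ℂ :=
  ∑ α ∈ A, c α * α u * α v

/-- Non-degeneracy of a bilinear form on `ℂⁿ`. -/
def NonDeg {n : ℕ} (B : V n → V n → ℂ) : Prop :=
  ∀ u : V n, (∀ v : V n, B u v = 0) → u = 0

/-- All covectors of `A` lie in an `n`-dimensional lattice. -/
def InLattice {n : ℕ} (A : Finset (D n)) : Prop :=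
  ∃ f : Fin n → D n, LinearIndependent ℂ f ∧
    ∀ β ∈ A, ∃ m : Fin n → ℤ, β = ∑ i, (m i : ℂ) • f i

/-- The `i`-th coordinate covector. -/
def coD {n : ℕ} (i : Fin n) : D n := LinearMap.proj i

/-- Partial derivative in the `i`-th coordinate direction. -/
def pd {n : ℕ} (i : Fin n) (f : V n → ℂ) (x : V n) : ℂ := fderiv ℂ f x (Pi.single i 1)

/-- Irreducibility: `A` does not split as a direct sum of two lower-dimensional systems. -/
def Irred {n : ℕ} (A : Finset (D n)) : Prop :=
  ¬ ∃ U₁ U₂ : Submodule ℂ (D n), U₁ ⊓ U₂ = ⊥ ∧ (∀ β ∈ A, β ∈ U₁ ∨ β ∈ U₂) ∧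
    (∃ β ∈ A, β ∉ U₁) ∧ (∃ β ∈ A, β ∉ U₂)

lemma coD_apply' {n : ℕ} (i : Fin n) (v : V n) : coD i v = v i := rfl

lemma sameSer_symm {n : ℕ} {α γ₁ γ₂ : D n} (h : SameSer α γ₁ γ₂) : SameSer α γ₂ γ₁ := by
  obtain ⟨k, h | h⟩ := h
  · refine ⟨-k, Or.inl ?_⟩
    push_cast
    rw [neg_smul, ← h]
    abel
  · refine ⟨k, Or.inr ?_⟩
    rw [← h]
    abel

lemma sameSer_refl {n : ℕ} (α β : D n) : SameSer α β β :=
  ⟨0, Or.inl (by simp)⟩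

set_option maxHeartbeats 2000000 in
/-- part of Proposition 3: the system `e¹, e², e¹+e², e¹−e²` is a
trigonometric ∨-system iff `c₁ = c₂`, equivalently `(e¹+e², e¹−e²) = 0`. -/
theorem four_covectors (c₁ c₂ cp cm : ℂ)
    (h1 : c₁ ≠ 0) (h2 : c₂ ≠ 0) (hp : cp ≠ 0) (hm : cm ≠ 0)
    (A : Finset (D 2))
    (hA : ∀ ξ, ξ ∈ A ↔ ξ = coD 0 ∨ ξ = coD 1 ∨ ξ = coD 0 + coD 1 ∨ ξ = coD 0 - coD 1)
    (c : D 2 → ℂ) (hc1 : c (coD 0) = c₁) (hc2 : c (coD 1) = c₂)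
    (hcp : c (coD 0 + coD 1) = cp) (hcm : c (coD 0 - coD 1) = cm)
    (hnd : NonDeg (Gform A c))
    (vee : D 2 → V 2) (hvee : ∀ ξ : D 2, ∀ v : V 2, Gform A c (vee ξ) v = ξ v) :
    (SeriesCond A c (fun ξ η => ξ (vee η)) ↔ c₁ = c₂) ∧
      (c₁ = c₂ ↔ (coD 0 + coD 1 : D 2) (vee (coD 0 - coD 1)) = 0) := by
  classical
  -- distinctness of the four covectors
  have d12 : (coD 0 : D 2) ≠ coD 1 := by
    intro h
    have h1 := DFunLike.congr_fun h (![1,0] : V 2)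
    simp [coD_apply'] at h1
  have d1p : (coD 0 : D 2) ≠ coD 0 + coD 1 := by
    intro h
    have h1 := DFunLike.congr_fun h (![0,1] : V 2)
    simp [coD_apply'] at h1
  have d1m : (coD 0 : D 2) ≠ coD 0 - coD 1 := by
    intro h
    have h1 := DFunLike.congr_fun h (![0,1] : V 2)
    simp [coD_apply'] at h1
  have d2p : (coD 1 : D 2) ≠ coD 0 + coD 1 := by
    intro h
    have h1 := DFunLike.congr_fun h (![1,0] : V 2)
    simp [coD_apply'] at h1
  have d2m : (coD 1 : D 2) ≠ coD 0 - coD 1 := by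
    intro h
    have h1 := DFunLike.congr_fun h (![1,0] : V 2)
    simp [coD_apply'] at h1
  have dpm : (coD 0 + coD 1 : D 2) ≠ coD 0 - coD 1 := by
    intro h
    have h1 := DFunLike.congr_fun h (![0,1] : V 2)
    simp [coD_apply'] at h1
    norm_num at h1
  have hAeq : A = {coD 0, coD 1, coD 0 + coD 1, coD 0 - coD 1} := by
    ext ξ
    simp [hA]
  have hGsum : ∀ u v : V 2, Gform A c u v
      = c₁ * (u 0 * v 0) + c₂ * (u 1 * v 1) + cp * ((u 0 + u 1) * (v 0 + v 1))
        + cm * ((u 0 - u 1) * (v 0 - v 1)) := by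
    intro u v
    rw [Gform, hAeq, Finset.sum_insert (by simp [d12, d1p, d1m]),
      Finset.sum_insert (by simp [d2p, d2m]), Finset.sum_insert (by simp [dpm]),
      Finset.sum_singleton, hc1, hc2, hcp, hcm]
    simp only [coD_apply', LinearMap.add_apply, LinearMap.sub_apply]
    ring
  have hΔ : (c₁+cp+cm)*(c₂+cp+cm) - (cp-cm)*(cp-cm) ≠ 0 := by
    intro h0
    by_cases hbd : cp - cm = 0 ∧ c₂ + cp + cm = 0
    · have hu : (![0,1] : V 2) = 0 := by
        refine hnd _ (fun v => ?_)
        rw [hGsum]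
        simp only [Matrix.cons_val_zero, Matrix.cons_val_one, Matrix.head_cons]
        linear_combination v 0 * hbd.1 + v 1 * hbd.2
      have := congr_fun hu 1
      simp at this
    · have hu : (![c₂+cp+cm, -(cp-cm)] : V 2) = 0 := by
        refine hnd _ (fun v => ?_)
        rw [hGsum]
        simp only [Matrix.cons_val_zero, Matrix.cons_val_one, Matrix.head_cons]
        linear_combination v 0 * h0
      refine hbd ⟨?_, ?_⟩
      · have h3 := congr_fun hu 1
        simp only [Matrix.cons_val_one, Matrix.head_cons, Matrix.cons_val_zero, Pi.zero_apply] at h3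
        linear_combination -h3
      · have := congr_fun hu 0
        simpa using this
  -- linear equations satisfied by the vee-vectors
  have E10 : (c₁+cp+cm) * vee (coD 0) 0 + (cp-cm) * vee (coD 0) 1 = 1 := by
    have h := hvee (coD 0) ![1,0]
    rw [hGsum] at h
    simp only [Matrix.cons_val_zero, Matrix.cons_val_one, Matrix.head_cons, coD_apply',
      LinearMap.add_apply, LinearMap.sub_apply] at h
    linear_combination h
  have E11 : (cp-cm) * vee (coD 0) 0 + (c₂+cp+cm) * vee (coD 0) 1 = 0 := by
    have h := hvee (coD 0) ![0,1]
    rw [hGsum] at h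
    simp only [Matrix.cons_val_zero, Matrix.cons_val_one, Matrix.head_cons, coD_apply',
      LinearMap.add_apply, LinearMap.sub_apply] at h
    linear_combination h
  have E20 : (c₁+cp+cm) * vee (coD 1) 0 + (cp-cm) * vee (coD 1) 1 = 0 := by
    have h := hvee (coD 1) ![1,0]
    rw [hGsum] at h
    simp only [Matrix.cons_val_zero, Matrix.cons_val_one, Matrix.head_cons, coD_apply',
      LinearMap.add_apply, LinearMap.sub_apply] at h
    linear_combination h
  have E21 : (cp-cm) * vee (coD 1) 0 + (c₂+cp+cm) * vee (coD 1) 1 = 1 := by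
    have h := hvee (coD 1) ![0,1]
    rw [hGsum] at h
    simp only [Matrix.cons_val_zero, Matrix.cons_val_one, Matrix.head_cons, coD_apply',
      LinearMap.add_apply, LinearMap.sub_apply] at h
    linear_combination h
  have Ep0 : (c₁+cp+cm) * vee (coD 0 + coD 1) 0 + (cp-cm) * vee (coD 0 + coD 1) 1 = 1 := by
    have h := hvee (coD 0 + coD 1) ![1,0]
    rw [hGsum] at h
    simp only [Matrix.cons_val_zero, Matrix.cons_val_one, Matrix.head_cons, coD_apply',
      LinearMap.add_apply, LinearMap.sub_apply] at h
    linear_combination h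
  have Ep1 : (cp-cm) * vee (coD 0 + coD 1) 0 + (c₂+cp+cm) * vee (coD 0 + coD 1) 1 = 1 := by
    have h := hvee (coD 0 + coD 1) ![0,1]
    rw [hGsum] at h
    simp only [Matrix.cons_val_zero, Matrix.cons_val_one, Matrix.head_cons, coD_apply',
      LinearMap.add_apply, LinearMap.sub_apply] at h
    linear_combination h
  have Em0 : (c₁+cp+cm) * vee (coD 0 - coD 1) 0 + (cp-cm) * vee (coD 0 - coD 1) 1 = 1 := by
    have h := hvee (coD 0 - coD 1) ![1,0]
    rw [hGsum] at h
    simp only [Matrix.cons_val_zero, Matrix.cons_val_one, Matrix.head_cons, coD_apply',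
      LinearMap.add_apply, LinearMap.sub_apply] at h
    linear_combination h
  have Em1 : (cp-cm) * vee (coD 0 - coD 1) 0 + (c₂+cp+cm) * vee (coD 0 - coD 1) 1 = -1 := by
    have h := hvee (coD 0 - coD 1) ![0,1]
    rw [hGsum] at h
    simp only [Matrix.cons_val_zero, Matrix.cons_val_one, Matrix.head_cons, coD_apply',
      LinearMap.add_apply, LinearMap.sub_apply] at h
    linear_combination h
  -- solved coordinates (multiplied by the determinant)
  have F10 : ((c₁+cp+cm)*(c₂+cp+cm) - (cp-cm)*(cp-cm)) * vee (coD 0) 0 = c₂+cp+cm := by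
    linear_combination (c₂+cp+cm) * E10 - (cp-cm) * E11
  have F11 : ((c₁+cp+cm)*(c₂+cp+cm) - (cp-cm)*(cp-cm)) * vee (coD 0) 1 = cm - cp := by
    linear_combination (c₁+cp+cm) * E11 - (cp-cm) * E10
  have F20 : ((c₁+cp+cm)*(c₂+cp+cm) - (cp-cm)*(cp-cm)) * vee (coD 1) 0 = cm - cp := by
    linear_combination (c₂+cp+cm) * E20 - (cp-cm) * E21
  have F21 : ((c₁+cp+cm)*(c₂+cp+cm) - (cp-cm)*(cp-cm)) * vee (coD 1) 1 = c₁+cp+cm := by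
    linear_combination (c₁+cp+cm) * E21 - (cp-cm) * E20
  have Fp0 : ((c₁+cp+cm)*(c₂+cp+cm) - (cp-cm)*(cp-cm)) * vee (coD 0 + coD 1) 0 = c₂ + 2*cm := by
    linear_combination (c₂+cp+cm) * Ep0 - (cp-cm) * Ep1
  have Fp1 : ((c₁+cp+cm)*(c₂+cp+cm) - (cp-cm)*(cp-cm)) * vee (coD 0 + coD 1) 1 = c₁ + 2*cm := by
    linear_combination (c₁+cp+cm) * Ep1 - (cp-cm) * Ep0
  have Fm0 : ((c₁+cp+cm)*(c₂+cp+cm) - (cp-cm)*(cp-cm)) * vee (coD 0 - coD 1) 0 = c₂ + 2*cp := by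
    linear_combination (c₂+cp+cm) * Em0 - (cp-cm) * Em1
  have Fm1 : ((c₁+cp+cm)*(c₂+cp+cm) - (cp-cm)*(cp-cm)) * vee (coD 0 - coD 1) 1 = -(c₁ + 2*cp) := by
    linear_combination (c₁+cp+cm) * Em1 - (cp-cm) * Em0
  -- the inner product (e¹+e², e¹−e²)
  have happ : (coD 0 + coD 1 : D 2) (vee (coD 0 - coD 1))
      = vee (coD 0 - coD 1) 0 + vee (coD 0 - coD 1) 1 := by
    simp [LinearMap.add_apply, coD_apply']
  have hval : ((c₁+cp+cm)*(c₂+cp+cm) - (cp-cm)*(cp-cm))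
      * (vee (coD 0 - coD 1) 0 + vee (coD 0 - coD 1) 1) = c₂ - c₁ := by
    linear_combination (c₂+cp+cm - (cp-cm)) * Em0 + (c₁+cp+cm - (cp-cm)) * Em1
  have part2 : c₁ = c₂ ↔ (coD 0 + coD 1 : D 2) (vee (coD 0 - coD 1)) = 0 := by
    rw [happ]
    constructor
    · intro hcc
      have h0 : ((c₁+cp+cm)*(c₂+cp+cm) - (cp-cm)*(cp-cm))
          * (vee (coD 0 - coD 1) 0 + vee (coD 0 - coD 1) 1) = 0 := by
        rw [hval, hcc, sub_self]
      exact (mul_eq_zero.mp h0).resolve_left hΔ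
    · intro hs
      have h0 := hval
      rw [hs, mul_zero] at h0
      linear_combination h0
  -- non-parallelism facts
  have np12 : ¬ Parallel (coD 0 : D 2) (coD 1) := by
    rintro ⟨t, ht⟩
    have h2' := DFunLike.congr_fun ht (![0,1] : V 2)
    simp only [LinearMap.smul_apply, smul_eq_mul, coD_apply', Matrix.cons_val_zero,
      Matrix.cons_val_one, Matrix.head_cons] at h2'
    exact one_ne_zero (α := ℂ) (by linear_combination h2')
  have np1p : ¬ Parallel (coD 0 : D 2) (coD 0 + coD 1) := by
    rintro ⟨t, ht⟩
    have h2' := DFunLike.congr_fun ht (![0,1] : V 2)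
    simp only [LinearMap.smul_apply, LinearMap.add_apply, smul_eq_mul, coD_apply',
      Matrix.cons_val_zero, Matrix.cons_val_one, Matrix.head_cons] at h2'
    exact one_ne_zero (α := ℂ) (by linear_combination h2')
  have np1m : ¬ Parallel (coD 0 : D 2) (coD 0 - coD 1) := by
    rintro ⟨t, ht⟩
    have h2' := DFunLike.congr_fun ht (![0,1] : V 2)
    simp only [LinearMap.smul_apply, LinearMap.sub_apply, smul_eq_mul, coD_apply',
      Matrix.cons_val_zero, Matrix.cons_val_one, Matrix.head_cons] at h2'
    exact one_ne_zero (α := ℂ) (by linear_combination -h2')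
  have np21 : ¬ Parallel (coD 1 : D 2) (coD 0) := by
    rintro ⟨t, ht⟩
    have h1' := DFunLike.congr_fun ht (![1,0] : V 2)
    simp only [LinearMap.smul_apply, smul_eq_mul, coD_apply', Matrix.cons_val_zero,
      Matrix.cons_val_one, Matrix.head_cons] at h1'
    exact one_ne_zero (α := ℂ) (by linear_combination h1')
  have np2p : ¬ Parallel (coD 1 : D 2) (coD 0 + coD 1) := by
    rintro ⟨t, ht⟩
    have h1' := DFunLike.congr_fun ht (![1,0] : V 2)
    simp only [LinearMap.smul_apply, LinearMap.add_apply, smul_eq_mul, coD_apply',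
      Matrix.cons_val_zero, Matrix.cons_val_one, Matrix.head_cons] at h1'
    exact one_ne_zero (α := ℂ) (by linear_combination h1')
  have np2m : ¬ Parallel (coD 1 : D 2) (coD 0 - coD 1) := by
    rintro ⟨t, ht⟩
    have h1' := DFunLike.congr_fun ht (![1,0] : V 2)
    simp only [LinearMap.smul_apply, LinearMap.sub_apply, smul_eq_mul, coD_apply',
      Matrix.cons_val_zero, Matrix.cons_val_one, Matrix.head_cons] at h1'
    exact one_ne_zero (α := ℂ) (by linear_combination h1')
  have npp1 : ¬ Parallel (coD 0 + coD 1 : D 2) (coD 0) := by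
    rintro ⟨t, ht⟩
    have h1' := DFunLike.congr_fun ht (![1,0] : V 2)
    have h2' := DFunLike.congr_fun ht (![0,1] : V 2)
    simp only [LinearMap.smul_apply, LinearMap.add_apply, smul_eq_mul, coD_apply',
      Matrix.cons_val_zero, Matrix.cons_val_one, Matrix.head_cons] at h1' h2'
    exact one_ne_zero (α := ℂ) (by linear_combination h1' - h2')
  have npp2 : ¬ Parallel (coD 0 + coD 1 : D 2) (coD 1) := by
    rintro ⟨t, ht⟩
    have h1' := DFunLike.congr_fun ht (![1,0] : V 2)
    have h2' := DFunLike.congr_fun ht (![0,1] : V 2)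
    simp only [LinearMap.smul_apply, LinearMap.add_apply, smul_eq_mul, coD_apply',
      Matrix.cons_val_zero, Matrix.cons_val_one, Matrix.head_cons] at h1' h2'
    exact one_ne_zero (α := ℂ) (by linear_combination h2' - h1')
  have nppm : ¬ Parallel (coD 0 + coD 1 : D 2) (coD 0 - coD 1) := by
    rintro ⟨t, ht⟩
    have h1' := DFunLike.congr_fun ht (![1,0] : V 2)
    have h2' := DFunLike.congr_fun ht (![0,1] : V 2)
    simp only [LinearMap.smul_apply, LinearMap.add_apply, LinearMap.sub_apply, smul_eq_mul,
      coD_apply', Matrix.cons_val_zero, Matrix.cons_val_one, Matrix.head_cons] at h1' h2'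
    exact one_ne_zero (α := ℂ) (by linear_combination (h1' - h2') / 2)
  have npm1 : ¬ Parallel (coD 0 - coD 1 : D 2) (coD 0) := by
    rintro ⟨t, ht⟩
    have h1' := DFunLike.congr_fun ht (![1,0] : V 2)
    have h2' := DFunLike.congr_fun ht (![0,1] : V 2)
    simp only [LinearMap.smul_apply, LinearMap.sub_apply, smul_eq_mul, coD_apply',
      Matrix.cons_val_zero, Matrix.cons_val_one, Matrix.head_cons] at h1' h2'
    exact one_ne_zero (α := ℂ) (by linear_combination h1' + h2')
  have npm2 : ¬ Parallel (coD 0 - coD 1 : D 2) (coD 1) := by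
    rintro ⟨t, ht⟩
    have h1' := DFunLike.congr_fun ht (![1,0] : V 2)
    have h2' := DFunLike.congr_fun ht (![0,1] : V 2)
    simp only [LinearMap.smul_apply, LinearMap.sub_apply, smul_eq_mul, coD_apply',
      Matrix.cons_val_zero, Matrix.cons_val_one, Matrix.head_cons] at h1' h2'
    exact one_ne_zero (α := ℂ) (by linear_combination h1' + h2')
  have npmp : ¬ Parallel (coD 0 - coD 1 : D 2) (coD 0 + coD 1) := by
    rintro ⟨t, ht⟩
    have h1' := DFunLike.congr_fun ht (![1,0] : V 2)
    have h2' := DFunLike.congr_fun ht (![0,1] : V 2)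
    simp only [LinearMap.smul_apply, LinearMap.add_apply, LinearMap.sub_apply, smul_eq_mul,
      coD_apply', Matrix.cons_val_zero, Matrix.cons_val_one, Matrix.head_cons] at h1' h2'
    exact one_ne_zero (α := ℂ) (by linear_combination (h1' + h2') / 2)
  -- same-series facts
  have ss1_2p : SameSer (coD 0 : D 2) (coD 1) (coD 0 + coD 1) := by
    refine ⟨-1, Or.inl (LinearMap.ext fun v => ?_)⟩
    simp only [LinearMap.sub_apply, LinearMap.add_apply, LinearMap.smul_apply, smul_eq_mul,
      coD_apply']
    push_cast
    ring
  have ss1_2m : SameSer (coD 0 : D 2) (coD 1) (coD 0 - coD 1) := by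
    refine ⟨1, Or.inr (LinearMap.ext fun v => ?_)⟩
    simp only [LinearMap.sub_apply, LinearMap.add_apply, LinearMap.smul_apply, smul_eq_mul,
      coD_apply']
    push_cast
    ring
  have ss1_pm : SameSer (coD 0 : D 2) (coD 0 + coD 1) (coD 0 - coD 1) := by
    refine ⟨2, Or.inr (LinearMap.ext fun v => ?_)⟩
    simp only [LinearMap.sub_apply, LinearMap.add_apply, LinearMap.smul_apply, smul_eq_mul,
      coD_apply']
    push_cast
    ring
  have ss2_1p : SameSer (coD 1 : D 2) (coD 0) (coD 0 + coD 1) := by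
    refine ⟨-1, Or.inl (LinearMap.ext fun v => ?_)⟩
    simp only [LinearMap.sub_apply, LinearMap.add_apply, LinearMap.smul_apply, smul_eq_mul,
      coD_apply']
    push_cast
    ring
  have ss2_1m : SameSer (coD 1 : D 2) (coD 0) (coD 0 - coD 1) := by
    refine ⟨1, Or.inl (LinearMap.ext fun v => ?_)⟩
    simp only [LinearMap.sub_apply, LinearMap.add_apply, LinearMap.smul_apply, smul_eq_mul,
      coD_apply']
    push_cast
    ring
  have ss2_pm : SameSer (coD 1 : D 2) (coD 0 + coD 1) (coD 0 - coD 1) := by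
    refine ⟨2, Or.inl (LinearMap.ext fun v => ?_)⟩
    simp only [LinearMap.sub_apply, LinearMap.add_apply, LinearMap.smul_apply, smul_eq_mul,
      coD_apply']
    push_cast
    ring
  have ssp_12 : SameSer (coD 0 + coD 1 : D 2) (coD 0) (coD 1) := by
    refine ⟨1, Or.inr (LinearMap.ext fun v => ?_)⟩
    simp only [LinearMap.sub_apply, LinearMap.add_apply, LinearMap.smul_apply, smul_eq_mul,
      coD_apply']
    push_cast
    ring
  have ssm_12 : SameSer (coD 0 - coD 1 : D 2) (coD 0) (coD 1) := by
    refine ⟨1, Or.inl (LinearMap.ext fun v => ?_)⟩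
    simp only [LinearMap.sub_apply, LinearMap.add_apply, LinearMap.smul_apply, smul_eq_mul,
      coD_apply']
    push_cast
    ring
  -- negative same-series facts
  have nssp_1m : ¬ SameSer (coD 0 + coD 1 : D 2) (coD 0) (coD 0 - coD 1) := by
    rintro ⟨k, h | h⟩ <;>
    · have h1' := DFunLike.congr_fun h (![1,0] : V 2)
      have h2' := DFunLike.congr_fun h (![0,1] : V 2)
      simp only [LinearMap.sub_apply, LinearMap.add_apply, LinearMap.smul_apply, smul_eq_mul,
        coD_apply', Matrix.cons_val_zero, Matrix.cons_val_one, Matrix.head_cons] at h1' h2'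
      first
        | exact one_ne_zero (α := ℂ) (by linear_combination h2' - h1')
        | exact one_ne_zero (α := ℂ) (by linear_combination (h1' - h2') / 3)
  have nssp_2m : ¬ SameSer (coD 0 + coD 1 : D 2) (coD 1) (coD 0 - coD 1) := by
    rintro ⟨k, h | h⟩ <;>
    · have h1' := DFunLike.congr_fun h (![1,0] : V 2)
      have h2' := DFunLike.congr_fun h (![0,1] : V 2)
      simp only [LinearMap.sub_apply, LinearMap.add_apply, LinearMap.smul_apply, smul_eq_mul,
        coD_apply', Matrix.cons_val_zero, Matrix.cons_val_one, Matrix.head_cons] at h1' h2'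
      first
        | exact one_ne_zero (α := ℂ) (by linear_combination (h2' - h1') / 3)
        | exact one_ne_zero (α := ℂ) (by linear_combination h1' - h2')
  have nssm_1p : ¬ SameSer (coD 0 - coD 1 : D 2) (coD 0) (coD 0 + coD 1) := by
    rintro ⟨k, h | h⟩ <;>
    · have h1' := DFunLike.congr_fun h (![1,0] : V 2)
      have h2' := DFunLike.congr_fun h (![0,1] : V 2)
      simp only [LinearMap.sub_apply, LinearMap.add_apply, LinearMap.smul_apply, smul_eq_mul,
        coD_apply', Matrix.cons_val_zero, Matrix.cons_val_one, Matrix.head_cons] at h1' h2'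
      first
        | exact one_ne_zero (α := ℂ) (by linear_combination -h1' - h2')
        | exact one_ne_zero (α := ℂ) (by linear_combination (h1' + h2') / 3)
  have nssm_2p : ¬ SameSer (coD 0 - coD 1 : D 2) (coD 1) (coD 0 + coD 1) := by
    rintro ⟨k, h | h⟩ <;>
    · have h1' := DFunLike.congr_fun h (![1,0] : V 2)
      have h2' := DFunLike.congr_fun h (![0,1] : V 2)
      simp only [LinearMap.sub_apply, LinearMap.add_apply, LinearMap.smul_apply, smul_eq_mul,
        coD_apply', Matrix.cons_val_zero, Matrix.cons_val_one, Matrix.head_cons] at h1' h2'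
      first
        | exact one_ne_zero (α := ℂ) (by linear_combination -h1' - h2')
        | exact one_ne_zero (α := ℂ) (by linear_combination (h1' + h2') / 3)
  refine ⟨⟨?_, ?_⟩, part2⟩
  · -- SeriesCond → c₁ = c₂
    intro hS
    have hmemp : (coD 0 + coD 1 : D 2) ∈ A := (hA _).mpr (Or.inr (Or.inr (Or.inl rfl)))
    have hser : IsSeries A (coD 0 + coD 1) {coD 0 - coD 1} := by
      refine ⟨?_, ?_, ?_, ?_⟩
      · exact Finset.singleton_subset_iff.mpr ((hA _).mpr (Or.inr (Or.inr (Or.inr rfl))))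
      · intro β hβ
        rw [Finset.mem_singleton] at hβ
        subst hβ
        exact nppm
      · intro γ₁ hγ₁ γ₂ hγ₂
        rw [Finset.mem_singleton] at hγ₁ hγ₂
        subst hγ₁; subst hγ₂
        exact sameSer_refl _ _
      · rintro β hβ hnpβ ⟨γ, hγ, hsg⟩
        rw [Finset.mem_singleton] at hγ
        subst hγ
        rcases (hA β).mp hβ with h | h | h | h
        · subst h; exact absurd hsg nssp_1m
        · subst h; exact absurd hsg nssp_2m
        · subst h; exact absurd ⟨1, (one_smul ℂ _).symm⟩ hnpβ
        · simp [h]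
    have h := hS _ hmemp _ hser ![1,0] ![0,1]
    rw [Finset.sum_singleton] at h
    simp only [hcm] at h
    have hw : wedge (coD 0 + coD 1) (coD 0 - coD 1) (![1,0] : V 2) ![0,1] = -2 := by
      simp only [wedge, LinearMap.add_apply, LinearMap.sub_apply, coD_apply',
        Matrix.cons_val_zero, Matrix.cons_val_one, Matrix.head_cons]
      ring
    rw [hw] at h
    have hs0 : (coD 0 + coD 1 : D 2) (vee (coD 0 - coD 1)) = 0 := by
      rcases mul_eq_zero.mp h with h' | h'
      · rcases mul_eq_zero.mp h' with h'' | h''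
        · exact absurd h'' hm
        · exact h''
      · norm_num at h'
    exact part2.mpr hs0
  · -- c₁ = c₂ → SeriesCond
    intro hcc α hα Γ hΓ va vb
    obtain ⟨hsub, hnp, hpair, hclo⟩ := hΓ
    rcases (hA α).mp hα with h | h | h | h
    · -- α = e¹ : the single series {e², e¹+e², e¹−e²}
      subst h
      rcases Finset.eq_empty_or_nonempty Γ with hE | ⟨γ, hγ⟩
      · simp [hE]
      · have hγ3 : ∀ x ∈ Γ, x = coD 1 ∨ x = coD 0 + coD 1 ∨ x = coD 0 - coD 1 := by
          intro x hx
          rcases (hA x).mp (hsub hx) with hh | hh | hh | hh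
          · exact absurd (show Parallel (coD 0 : D 2) x by
              rw [hh]; exact ⟨1, (one_smul ℂ _).symm⟩) (hnp x hx)
          · exact Or.inl hh
          · exact Or.inr (Or.inl hh)
          · exact Or.inr (Or.inr hh)
        have hmem : ∀ x : D 2, (x = coD 1 ∨ x = coD 0 + coD 1 ∨ x = coD 0 - coD 1) → x ∈ Γ := by
          intro x hx
          refine hclo x ((hA x).mpr (by tauto)) ?_ ⟨γ, hγ, ?_⟩
          · rcases hx with h' | h' | h' <;> subst h'
            exacts [np12, np1p, np1m]
          · rcases hx with h' | h' | h' <;> rcases hγ3 γ hγ with h'' | h'' | h'' <;>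
              subst h' <;> rw [h''] <;>
              first
                | exact sameSer_refl _ _
                | exact ss1_2p
                | exact ss1_2m
                | exact ss1_pm
                | exact sameSer_symm ss1_2p
                | exact sameSer_symm ss1_2m
                | exact sameSer_symm ss1_pm
        have hΓeq : Γ = {coD 1, coD 0 + coD 1, coD 0 - coD 1} := by
          apply Finset.Subset.antisymm
          · intro x hx
            simp only [Finset.mem_insert, Finset.mem_singleton]
            exact hγ3 x hx
          · intro x hx
            simp only [Finset.mem_insert, Finset.mem_singleton] at hx
            exact hmem x hx
        rw [hΓeq, Finset.sum_insert (by simp [d2p, d2m]), Finset.sum_insert (by simp [dpm]),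
          Finset.sum_singleton]
        simp only [hc2, hcp, hcm, wedge, LinearMap.add_apply, LinearMap.sub_apply, coD_apply']
        apply mul_left_cancel₀ hΔ
        rw [mul_zero]
        linear_combination (va 0 * vb 1 - vb 0 * va 1) * c₂ * F20
          + (va 0 * (vb 0 + vb 1) - vb 0 * (va 0 + va 1)) * cp * Fp0
          + (va 0 * (vb 0 - vb 1) - vb 0 * (va 0 - va 1)) * cm * Fm0
    · -- α = e² : the single series {e¹, e¹+e², e¹−e²}
      subst h
      rcases Finset.eq_empty_or_nonempty Γ with hE | ⟨γ, hγ⟩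
      · simp [hE]
      · have hγ3 : ∀ x ∈ Γ, x = coD 0 ∨ x = coD 0 + coD 1 ∨ x = coD 0 - coD 1 := by
          intro x hx
          rcases (hA x).mp (hsub hx) with hh | hh | hh | hh
          · exact Or.inl hh
          · exact absurd (show Parallel (coD 1 : D 2) x by
              rw [hh]; exact ⟨1, (one_smul ℂ _).symm⟩) (hnp x hx)
          · exact Or.inr (Or.inl hh)
          · exact Or.inr (Or.inr hh)
        have hmem : ∀ x : D 2, (x = coD 0 ∨ x = coD 0 + coD 1 ∨ x = coD 0 - coD 1) → x ∈ Γ := by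
          intro x hx
          refine hclo x ((hA x).mpr (by tauto)) ?_ ⟨γ, hγ, ?_⟩
          · rcases hx with h' | h' | h' <;> subst h'
            exacts [np21, np2p, np2m]
          · rcases hx with h' | h' | h' <;> rcases hγ3 γ hγ with h'' | h'' | h'' <;>
              subst h' <;> rw [h''] <;>
              first
                | exact sameSer_refl _ _
                | exact ss2_1p
                | exact ss2_1m
                | exact ss2_pm
                | exact sameSer_symm ss2_1p
                | exact sameSer_symm ss2_1m
                | exact sameSer_symm ss2_pm
        have hΓeq : Γ = {coD 0, coD 0 + coD 1, coD 0 - coD 1} := by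
          apply Finset.Subset.antisymm
          · intro x hx
            simp only [Finset.mem_insert, Finset.mem_singleton]
            exact hγ3 x hx
          · intro x hx
            simp only [Finset.mem_insert, Finset.mem_singleton] at hx
            exact hmem x hx
        rw [hΓeq, Finset.sum_insert (by simp [d1p, d1m]), Finset.sum_insert (by simp [dpm]),
          Finset.sum_singleton]
        simp only [hc1, hcp, hcm, wedge, LinearMap.add_apply, LinearMap.sub_apply, coD_apply']
        apply mul_left_cancel₀ hΔ
        rw [mul_zero]
        linear_combination (va 1 * vb 0 - vb 1 * va 0) * c₁ * F11
          + (va 1 * (vb 0 + vb 1) - vb 1 * (va 0 + va 1)) * cp * Fp1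
          + (va 1 * (vb 0 - vb 1) - vb 1 * (va 0 - va 1)) * cm * Fm1
    · -- α = e¹+e² : the series {e¹, e²} and {e¹−e²}
      subst h
      have hγ3 : ∀ x ∈ Γ, x = coD 0 ∨ x = coD 1 ∨ x = coD 0 - coD 1 := by
        intro x hx
        rcases (hA x).mp (hsub hx) with hh | hh | hh | hh
        · exact Or.inl hh
        · exact Or.inr (Or.inl hh)
        · exact absurd (show Parallel (coD 0 + coD 1 : D 2) x by
            rw [hh]; exact ⟨1, (one_smul ℂ _).symm⟩) (hnp x hx)
        · exact Or.inr (Or.inr hh)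
      rcases Finset.eq_empty_or_nonempty Γ with hE | ⟨γ, hγ⟩
      · simp [hE]
      have h12 : (coD 0 ∈ Γ ∧ coD 1 ∈ Γ) ∨ (coD 0 - coD 1 : D 2) ∈ Γ := by
        rcases hγ3 γ hγ with h' | h' | h'
        · subst h'
          exact Or.inl ⟨hγ, hclo _ ((hA _).mpr (by tauto)) npp2 ⟨_, hγ, sameSer_symm ssp_12⟩⟩
        · subst h'
          exact Or.inl ⟨hclo _ ((hA _).mpr (by tauto)) npp1 ⟨_, hγ, ssp_12⟩, hγ⟩
        · subst h'
          exact Or.inr hγ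
      rcases h12 with ⟨hg0, hg1⟩ | hmm2
      · have hΓeq : Γ = {coD 0, coD 1} := by
          apply Finset.Subset.antisymm
          · intro x hx
            simp only [Finset.mem_insert, Finset.mem_singleton]
            rcases hγ3 x hx with h' | h' | h'
            · exact Or.inl h'
            · exact Or.inr h'
            · exfalso
              subst h'
              exact nssp_1m (sameSer_symm (hpair _ hx _ hg0))
          · intro x hx
            simp only [Finset.mem_insert, Finset.mem_singleton] at hx
            rcases hx with h' | h' <;> subst h'
            exacts [hg0, hg1]
        rw [hΓeq, Finset.sum_insert (by simp [d12]), Finset.sum_singleton]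
        simp only [hc1, hc2, wedge, LinearMap.add_apply, coD_apply']
        apply mul_left_cancel₀ hΔ
        rw [mul_zero]
        linear_combination ((va 0 + va 1) * vb 0 - (vb 0 + vb 1) * va 0) * c₁ * (F10 + F11)
          + ((va 0 + va 1) * vb 1 - (vb 0 + vb 1) * va 1) * c₂ * (F20 + F21)
          + (-2 * cm * (va 0 * vb 1 - vb 0 * va 1)) * hcc
      · have hΓeq : Γ = {coD 0 - coD 1} := by
          apply Finset.Subset.antisymm
          · intro x hx
            simp only [Finset.mem_singleton]
            rcases hγ3 x hx with h' | h' | h'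
            · exfalso
              subst h'
              exact nssp_1m (hpair _ hx _ hmm2)
            · exfalso
              subst h'
              exact nssp_2m (hpair _ hx _ hmm2)
            · exact h'
          · exact Finset.singleton_subset_iff.mpr hmm2
        rw [hΓeq, Finset.sum_singleton]
        simp only [hcm, wedge, LinearMap.add_apply, LinearMap.sub_apply, coD_apply']
        apply mul_left_cancel₀ hΔ
        rw [mul_zero]
        linear_combination
          ((va 0 + va 1) * (vb 0 - vb 1) - (vb 0 + vb 1) * (va 0 - va 1)) * cm * (Fm0 + Fm1)
          + (-(cm * ((va 0 + va 1) * (vb 0 - vb 1) - (vb 0 + vb 1) * (va 0 - va 1)))) * hcc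
    · -- α = e¹−e² : the series {e¹, e²} and {e¹+e²}
      subst h
      have hγ3 : ∀ x ∈ Γ, x = coD 0 ∨ x = coD 1 ∨ x = coD 0 + coD 1 := by
        intro x hx
        rcases (hA x).mp (hsub hx) with hh | hh | hh | hh
        · exact Or.inl hh
        · exact Or.inr (Or.inl hh)
        · exact Or.inr (Or.inr hh)
        · exact absurd (show Parallel (coD 0 - coD 1 : D 2) x by
            rw [hh]; exact ⟨1, (one_smul ℂ _).symm⟩) (hnp x hx)
      rcases Finset.eq_empty_or_nonempty Γ with hE | ⟨γ, hγ⟩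
      · simp [hE]
      have h12 : (coD 0 ∈ Γ ∧ coD 1 ∈ Γ) ∨ (coD 0 + coD 1 : D 2) ∈ Γ := by
        rcases hγ3 γ hγ with h' | h' | h'
        · subst h'
          exact Or.inl ⟨hγ, hclo _ ((hA _).mpr (by tauto)) npm2 ⟨_, hγ, sameSer_symm ssm_12⟩⟩
        · subst h'
          exact Or.inl ⟨hclo _ ((hA _).mpr (by tauto)) npm1 ⟨_, hγ, ssm_12⟩, hγ⟩
        · subst h'
          exact Or.inr hγ
      rcases h12 with ⟨hg0, hg1⟩ | hmm2
      · have hΓeq : Γ = {coD 0, coD 1} := by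
          apply Finset.Subset.antisymm
          · intro x hx
            simp only [Finset.mem_insert, Finset.mem_singleton]
            rcases hγ3 x hx with h' | h' | h'
            · exact Or.inl h'
            · exact Or.inr h'
            · exfalso
              subst h'
              exact nssm_1p (sameSer_symm (hpair _ hx _ hg0))
          · intro x hx
            simp only [Finset.mem_insert, Finset.mem_singleton] at hx
            rcases hx with h' | h' <;> subst h'
            exacts [hg0, hg1]
        rw [hΓeq, Finset.sum_insert (by simp [d12]), Finset.sum_singleton]
        simp only [hc1, hc2, wedge, LinearMap.sub_apply, coD_apply']
        apply mul_left_cancel₀ hΔ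
        rw [mul_zero]
        linear_combination ((va 0 - va 1) * vb 0 - (vb 0 - vb 1) * va 0) * c₁ * (F10 - F11)
          + ((va 0 - va 1) * vb 1 - (vb 0 - vb 1) * va 1) * c₂ * (F20 - F21)
          + (2 * cp * (va 0 * vb 1 - vb 0 * va 1)) * hcc
      · have hΓeq : Γ = {coD 0 + coD 1} := by
          apply Finset.Subset.antisymm
          · intro x hx
            simp only [Finset.mem_singleton]
            rcases hγ3 x hx with h' | h' | h'
            · exfalso
              subst h'
              exact nssm_1p (hpair _ hx _ hmm2)
            · exfalso
              subst h'
              exact nssm_2p (hpair _ hx _ hmm2)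
            · exact h'
          · exact Finset.singleton_subset_iff.mpr hmm2
        rw [hΓeq, Finset.sum_singleton]
        simp only [hcp, wedge, LinearMap.add_apply, LinearMap.sub_apply, coD_apply']
        apply mul_left_cancel₀ hΔ
        rw [mul_zero]
        linear_combination
          ((va 0 - va 1) * (vb 0 + vb 1) - (vb 0 - vb 1) * (va 0 + va 1)) * cp * (Fp0 - Fp1)
          + (-(cp * ((va 0 - va 1) * (vb 0 + vb 1) - (vb 0 - vb 1) * (va 0 + va 1)))) * hcc
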